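/- (Key step of Lemma 3.9) Let μ be regular, λ = μ⁺, and let S ⊆ λ satisfy: for every δ ∈ S with cf(δ) = μ, δ = sup(δ ∩ S). Let δ₀ < γ < λ with cf(δ₀) < μ and cf(γ) < μ. Then there is an injection i ↦ j_i defined on A = {i ∈ γ − δ₀ : cf(i) = μ and i ∈ S} such that for each i ∈ A: j_i ∈ (i − δ₀) ∩ S, cf(j_i) < μ, and the map is injective. -/
import Mathlib

open Cardinal Set

/-- A set of ordinals below `o`, of cardinality less than `cof o`, is bounded below `o`. -/
lemma bounded_of_mk_lt_cof {o : Ordinal.{0}} {s : Set Ordinal.{0}}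
    (hs : ∀ c ∈ s, c < o) (hcard : Cardinal.mk s < Cardinal.lift.{1, 0} o.cof) :
    ∃ b, b < o ∧ ∀ c ∈ s, c ≤ b := by
  obtain ⟨c', hc', hlift⟩ := Cardinal.lt_lift_iff.mp hcard
  have h1 : #(ULift.{1} c'.out) = #s := by
    rw [Cardinal.mk_uLift, Cardinal.mk_out, hlift]
  obtain ⟨ψ⟩ := Cardinal.eq.mp h1
  set f : c'.out → Ordinal.{0} := fun x => ((ψ (ULift.up x) : s) : Ordinal) with hf_def
  have hf : ∀ x, f x < o := fun x => hs _ (ψ (ULift.up x)).2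
  have hsup : iSup f < o :=
    Ordinal.iSup_lt_ord (by rw [Cardinal.mk_out]; exact hc') hf
  refine ⟨iSup f, hsup, fun c hc => ?_⟩
  have h2 : f (ψ.symm ⟨c, hc⟩).down = c := by
    simp only [hf_def]
    rw [ULift.up_down, Equiv.apply_symm_apply]
  calc c = f (ψ.symm ⟨c, hc⟩).down := h2.symm
    _ ≤ iSup f := Ordinal.le_iSup f _

/-- Key combinatorial step of Lemma 3.9: `μ` regular, `λ = μ⁺`, `S ⊆ λ` such that
every `δ ∈ S` of cofinality `μ` is a limit of points of `S` (indeed of points of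
`S` of cofinality `< μ`).  For `δ₀ < γ < λ` of cofinality `< μ`, the points
`i ∈ γ − δ₀` with `cf i = μ` and `i ∈ S` (at most `μ` many) can be injectively
matched with points `j_i ∈ (i − δ₀) ∩ S` of cofinality `< μ`. -/
theorem stmt12 (μ : Cardinal.{0}) (hμ : μ.IsRegular) (S : Set Ordinal.{0})
    (hS : ∀ δ ∈ S, δ.cof = μ → δ = sSup (S ∩ Set.Iio δ))
    (hS2 : ∀ δ ∈ S, δ.cof = μ → ∀ b, b < δ → ∃ c ∈ S, b < c ∧ c < δ ∧ c.cof < μ)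
    (δ0 γ : Ordinal.{0}) (hδγ : δ0 < γ) (hγ : γ < (Order.succ μ).ord)
    (hcof1 : δ0.cof < μ) (hcof2 : γ.cof < μ)
    (hA : Cardinal.mk {i : Ordinal.{0} | δ0 ≤ i ∧ i < γ ∧ i.cof = μ ∧ i ∈ S}
      ≤ Cardinal.lift.{1, 0} μ) :
    ∃ j : Ordinal.{0} → Ordinal.{0},
      (∀ i, δ0 ≤ i → i < γ → i.cof = μ → i ∈ S →
        δ0 ≤ j i ∧ j i < i ∧ j i ∈ S ∧ (j i).cof < μ) ∧
      Set.InjOn j {i | δ0 ≤ i ∧ i < γ ∧ i.cof = μ ∧ i ∈ S} := by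
  classical
  set As : Set Ordinal.{0} := {i | δ0 ≤ i ∧ i < γ ∧ i.cof = μ ∧ i ∈ S} with hAs
  -- injection of `As` into `Iio μ.ord`
  have hmkIio : #(Set.Iio μ.ord) = Cardinal.lift.{1, 0} μ := by
    rw [Ordinal.mk_Iio_ordinal, Cardinal.card_ord]
  have hle : #As ≤ #(Set.Iio μ.ord) := by rw [hmkIio]; exact hA
  obtain ⟨e⟩ := (Cardinal.le_def _ _).mp hle
  have hδ0lt : ∀ a : As, δ0 < (a : Ordinal) := by
    intro a
    rcases lt_or_eq_of_le a.2.1 with h | h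
    · exact h
    · exfalso; rw [h, a.2.2.2.1] at hcof1; exact absurd hcof1 (lt_irrefl μ)
  -- key existence step
  have key : ∀ (a : As) (p : ∀ b : As, (e b : Ordinal) < (e a : Ordinal) → Ordinal),
      ∃ c, (δ0 ≤ c ∧ c < (a : Ordinal) ∧ c ∈ S ∧ c.cof < μ) ∧
        ∀ b hb, p b hb ≠ c := by
    intro a p
    set bad : Set Ordinal :=
      (Set.range fun q : {b : As // (e b : Ordinal) < (e a : Ordinal)} => p q.1 q.2)
        ∩ Set.Iio (a : Ordinal) with hbad
    have hbadlt : ∀ c ∈ bad, c < (a : Ordinal) := fun c hc => hc.2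
    have hcard : #bad < Cardinal.lift.{1, 0} (a : Ordinal).cof := by
      rw [a.2.2.2.1]
      calc #bad ≤ #(Set.range fun q : {b : As // (e b : Ordinal) < (e a : Ordinal)} =>
              p q.1 q.2) := Cardinal.mk_le_mk_of_subset Set.inter_subset_left
        _ ≤ #{b : As // (e b : Ordinal) < (e a : Ordinal)} := Cardinal.mk_range_le
        _ ≤ #(Set.Iio (e a : Ordinal)) := by
            refine Cardinal.mk_le_of_injective (f := fun q => ⟨(e q.1 : Ordinal), q.2⟩) ?_
            intro q₁ q₂ h
            have h2 := congrArg Subtype.val h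
            exact Subtype.ext (e.injective (Subtype.ext h2))
        _ = Cardinal.lift.{1, 0} (e a : Ordinal).card := Ordinal.mk_Iio_ordinal _
        _ < Cardinal.lift.{1, 0} μ := by
            rw [Cardinal.lift_lt]
            exact Cardinal.lt_ord.mp (e a).2
    obtain ⟨b0, hb0o, hb0⟩ := bounded_of_mk_lt_cof hbadlt hcard
    have hmaxlt : max b0 δ0 < (a : Ordinal) := max_lt hb0o (hδ0lt a)
    obtain ⟨c, hcS, hbc, hca, hccof⟩ := hS2 a a.2.2.2.2 a.2.2.2.1 (max b0 δ0) hmaxlt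
    refine ⟨c, ⟨le_of_lt (lt_of_le_of_lt (le_max_right _ _) hbc), hca, hcS, hccof⟩, ?_⟩
    intro b hb hcontra
    have hmem : p b hb ∈ bad := ⟨⟨⟨b, hb⟩, rfl⟩, by rw [hcontra]; exact hca⟩
    have := hb0 _ hmem
    rw [hcontra] at this
    exact absurd (lt_of_le_of_lt (le_max_left _ _) hbc) (not_lt_of_ge this)
  -- well-founded recursion along e-order
  have wf : WellFounded (fun a b : As => (e a : Ordinal) < (e b : Ordinal)) :=
    InvImage.wf (fun a : As => (e a : Ordinal)) (Ordinal.lt_wf)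
  set F : ∀ a : As, (∀ b : As, (e b : Ordinal) < (e a : Ordinal) → Ordinal) → Ordinal :=
    fun a IH => Classical.choose (key a IH) with hF
  set g : As → Ordinal := wf.fix F with hg
  have gspec : ∀ a : As, (δ0 ≤ g a ∧ g a < (a : Ordinal) ∧ g a ∈ S ∧ (g a).cof < μ) ∧
      ∀ b : As, (e b : Ordinal) < (e a : Ordinal) → g b ≠ g a := by
    intro a
    have hfix : g a = F a (fun b _ => g b) := wf.fix_eq F a
    rw [hfix]
    exact Classical.choose_spec (key a (fun b _ => g b))
  refine ⟨fun i => if h : i ∈ As then g ⟨i, h⟩ else 0, ?_, ?_⟩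
  · intro i h1 h2 h3 h4
    have hi : i ∈ As := ⟨h1, h2, h3, h4⟩
    simp only [dif_pos hi]
    obtain ⟨⟨p1, p2, p3, p4⟩, _⟩ := gspec ⟨i, hi⟩
    exact ⟨p1, p2, p3, p4⟩
  · intro i₁ h₁ i₂ h₂ heq
    simp only [dif_pos h₁, dif_pos h₂] at heq
    by_contra hne
    have hne' : (e ⟨i₁, h₁⟩ : Ordinal) ≠ (e ⟨i₂, h₂⟩ : Ordinal) := by
      intro h
      exact hne (congrArg Subtype.val (e.injective (Subtype.ext h)))
    rcases lt_or_gt_of_ne hne' with h | h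
    · exact (gspec ⟨i₂, h₂⟩).2 ⟨i₁, h₁⟩ h heq
    · exact (gspec ⟨i₁, h₁⟩).2 ⟨i₂, h₂⟩ h heq.symm
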